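/- Let δ be a truncated exponential random variable with parameter λ > 0 (density λe^{-λy}/(1-e^{-λ}) on [0,1]). For ρ, γ, ε ≥ 0 with ρ - 2ε ≥ 0 and ρ + 2ε ≤ 1, P[ρ - 2ε ≤ δ ≤ ρ + 2γ] ≤ (1 - e^{-2(γ+ε)λ}) · e^{4ελ} · (P[δ > ρ + 2ε] + e^{-λ}/(1 - e^{-λ})). -/

import Mathlib

open MeasureTheory Real

lemma exp_int (l a b : ℝ) :
    ∫ y in a..b, l * Real.exp (-l*y) = Real.exp (-l*a) - Real.exp (-l*b) := by
  have h : ∀ y ∈ Set.uIcc a b, HasDerivAt (fun y => -Real.exp (-l*y)) (l * Real.exp (-l*y)) y := by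
    intro y _
    have := (Real.hasDerivAt_exp (-l*y)).comp y ((hasDerivAt_id y).const_mul (-l))
    simpa [mul_comm, Function.comp_def, Pi.neg_def] using this.neg
  rw [intervalIntegral.integral_eq_sub_of_hasDerivAt h
    (((continuous_const.mul ((continuous_const.mul continuous_id).rexp)).intervalIntegrable a b))]
  ring

lemma lint_Ioc (l a b : ℝ) (hl : 0 < l) (hab : a ≤ b) :
    ∫⁻ y in Set.Ioc a b, ENNReal.ofReal (l * Real.exp (-l*y) / (1 - Real.exp (-l)))
      = ENNReal.ofReal ((Real.exp (-l*a) - Real.exp (-l*b)) / (1 - Real.exp (-l))) := by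
  have hcont : Continuous fun y => l * Real.exp (-l*y) / (1 - Real.exp (-l)) := by
    continuity
  rw [← ofReal_integral_eq_lintegral_ofReal (hcont.integrableOn_Ioc)]
  · congr 1
    rw [← intervalIntegral.integral_of_le hab, intervalIntegral.integral_div, exp_int]
  · have h1 : Real.exp (-l) < 1 := by
      rw [Real.exp_lt_one_iff]; linarith
    filter_upwards with y
    have h2 : (0:ℝ) < 1 - Real.exp (-l) := by linarith
    positivity

lemma lint_Icc (l a b : ℝ) (hl : 0 < l) (hab : a ≤ b) :
    ∫⁻ y in Set.Icc a b, ENNReal.ofReal (l * Real.exp (-l*y) / (1 - Real.exp (-l)))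
      = ENNReal.ofReal ((Real.exp (-l*a) - Real.exp (-l*b)) / (1 - Real.exp (-l))) := by
  rw [← lint_Ioc l a b hl hab]
  exact setLIntegral_congr (Ioc_ae_eq_Icc).symm

/-- Density of the truncated exponential distribution `Texp l` on `[0,1]`. -/
noncomputable def texpDensity (l y : ℝ) : ℝ :=
  if y ∈ Set.Icc (0:ℝ) 1 then l * Real.exp (-l * y) / (1 - Real.exp (-l)) else 0

/-- The truncated exponential distribution on `[0,1]` with parameter `l`. -/
noncomputable def texpMeasure (l : ℝ) : Measure ℝ :=
  volume.withDensity fun y => ENNReal.ofReal (texpDensity l y)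

lemma tm_apply (l : ℝ) (s : Set ℝ) (hs : MeasurableSet s) :
    texpMeasure l s
      = ∫⁻ y in s ∩ Set.Icc 0 1,
          ENNReal.ofReal (l * Real.exp (-l*y) / (1 - Real.exp (-l))) := by
  rw [texpMeasure, withDensity_apply _ hs]
  have h : ∀ y, ENNReal.ofReal (texpDensity l y)
      = (Set.Icc (0:ℝ) 1).indicator
          (fun y => ENNReal.ofReal (l * Real.exp (-l*y) / (1 - Real.exp (-l)))) y := by
    intro y
    unfold texpDensity
    by_cases h : y ∈ Set.Icc (0:ℝ) 1 <;> simp [h, Set.indicator]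
  simp_rw [h]
  rw [lintegral_indicator measurableSet_Icc,
    Measure.restrict_restrict measurableSet_Icc, Set.inter_comm]

theorem stmt_3 (l ρ γ ε : ℝ) (hl : 0 < l) (hρ : 0 ≤ ρ) (hγ : 0 ≤ γ) (hε : 0 ≤ ε)
    (h1 : 0 ≤ ρ - 2 * ε) (h2 : ρ + 2 * ε ≤ 1) :
    texpMeasure l (Set.Icc (ρ - 2 * ε) (ρ + 2 * γ)) ≤
      ENNReal.ofReal ((1 - Real.exp (-2 * (γ + ε) * l)) * Real.exp (4 * ε * l)) *
        (texpMeasure l {y : ℝ | ρ + 2 * ε < y} +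
          ENNReal.ofReal (Real.exp (-l) / (1 - Real.exp (-l)))) := by
  set a := ρ - 2 * ε with ha
  set b := ρ + 2 * γ with hb
  set t := ρ + 2 * ε with ht
  have hab : a ≤ b := by simp only [ha, hb]; linarith
  have ha1 : a ≤ 1 := by simp only [ha]; linarith
  have ham : a ≤ min b 1 := le_min hab ha1
  have ht0 : 0 ≤ t := by simp only [ht]; linarith
  have hE : Real.exp (-l) < 1 := by rw [Real.exp_lt_one_iff]; linarith
  have hD : (0:ℝ) < 1 - Real.exp (-l) := by linarith
  -- LHS
  have hLset : Set.Icc a b ∩ Set.Icc (0:ℝ) 1 = Set.Icc a (min b 1) := by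
    rw [Set.Icc_inter_Icc, max_eq_left h1]
  have hLHS : texpMeasure l (Set.Icc a b)
      = ENNReal.ofReal ((Real.exp (-l*a) - Real.exp (-l*(min b 1))) / (1 - Real.exp (-l))) := by
    rw [tm_apply _ _ measurableSet_Icc, hLset, lint_Icc _ _ _ hl ham]
  -- tail
  have hTset : {y : ℝ | t < y} ∩ Set.Icc (0:ℝ) 1 = Set.Ioc t 1 := by
    ext y
    simp only [Set.mem_inter_iff, Set.mem_setOf_eq, Set.mem_Icc, Set.mem_Ioc]
    constructor
    · rintro ⟨h, _, h'⟩; exact ⟨h, h'⟩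
    · rintro ⟨h, h'⟩; exact ⟨h, by linarith, h'⟩
  have hTail : texpMeasure l {y : ℝ | t < y}
      = ENNReal.ofReal ((Real.exp (-l*t) - Real.exp (-l)) / (1 - Real.exp (-l))) := by
    have hIoi : {y : ℝ | t < y} = Set.Ioi t := rfl
    rw [tm_apply _ _ (hIoi ▸ measurableSet_Ioi), hTset, lint_Ioc _ _ _ hl h2]
    norm_num
  rw [hLHS, hTail]
  have hC0 : 0 ≤ (1 - Real.exp (-2 * (γ + ε) * l)) * Real.exp (4 * ε * l) := by
    have : Real.exp (-2 * (γ + ε) * l) ≤ 1 := by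
      rw [Real.exp_le_one_iff]; nlinarith
    have := Real.exp_pos (4 * ε * l)
    nlinarith
  have htail0 : Real.exp (-l) ≤ Real.exp (-l*t) :=
    Real.exp_le_exp.mpr (by nlinarith)
  rw [← ENNReal.ofReal_add (div_nonneg (by linarith) hD.le) (by positivity), ← ENNReal.ofReal_mul hC0]
  apply ENNReal.ofReal_le_ofReal
  have heq : (Real.exp (-l*t) - Real.exp (-l)) / (1 - Real.exp (-l))
      + Real.exp (-l) / (1 - Real.exp (-l)) = Real.exp (-l*t) / (1 - Real.exp (-l)) := by
    field_simp
    ring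
  rw [heq]
  have key : (1 - Real.exp (-2 * (γ + ε) * l)) * Real.exp (4 * ε * l) * Real.exp (-l*t)
      = Real.exp (-l*a) - Real.exp (-l*b) := by
    rw [sub_mul, one_mul, sub_mul, ← Real.exp_add, ← Real.exp_add, ← Real.exp_add]
    congr 1 <;> · congr 1; simp only [ha, hb, ht]; ring
  have hmb : Real.exp (-l*b) ≤ Real.exp (-l*(min b 1)) :=
    Real.exp_le_exp.mpr (by nlinarith [min_le_left b 1])
  rw [mul_div_assoc', key]
  gcongr
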